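/- arXiv:1907.01911 — 2 statements merged into one kernel-verified Lean document; each statement's English description precedes it below -/
import Mathlib

section
/- Let $(\eta_i)_{i\in\mathcal{I}}$ be real numbers indexed by a countable set such that for every $\varepsilon>0$ only finitely many satisfy $|\eta_i|\geq\varepsilon$, suppose $\sum_{i}\eta_i^2<\infty$ and the principal-value sum $S=\lim_{\varepsilon\downarrow 0}\sum_{|\eta_i|\geq\varepsilon}\eta_i$ exists. Then the partial products $\prod_{|\eta_i|\geq\varepsilon}(1-\eta_i z)$ converge locally uniformly on $\mathbb{C}$ as $\varepsilon\downarrow 0$ to an entire function $\Lambda$, and $\dot\Lambda(0)=-S$ and $\ddot\Lambda(0)=S^2-\sum_i\eta_i^2$. -/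
open Filter Topology

open Set Metric Complex

namespace Stmt0Aux

variable {ι : Type*} [DecidableEq ι]

lemma hasDerivAt_prod (η : ι → ℝ) (t : Finset ι) (x : ℂ) :
    HasDerivAt (fun z : ℂ => ∏ i ∈ t, (1 - (η i : ℂ) * z))
      (∑ i ∈ t, (∏ j ∈ t.erase i, (1 - (η j : ℂ) * x)) * (-(η i : ℂ))) x := by
  have h := HasDerivAt.finset_prod (u := t) (𝕜 := ℂ) (f := fun i (z : ℂ) => 1 - (η i : ℂ) * z)
    (f' := fun i => -(η i : ℂ)) (x := x) (fun i _ => by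
      simpa using ((hasDerivAt_id x).const_mul ((η i : ℂ))).const_sub 1)
  simpa [smul_eq_mul, Finset.prod_fn] using h

lemma differentiable_prod (η : ι → ℝ) (t : Finset ι) :
    Differentiable ℂ (fun z : ℂ => ∏ i ∈ t, (1 - (η i : ℂ) * z)) :=
  fun x => (hasDerivAt_prod η t x).differentiableAt

lemma deriv_prod_eq (η : ι → ℝ) (t : Finset ι) :
    deriv (fun z : ℂ => ∏ i ∈ t, (1 - (η i : ℂ) * z))
      = fun x => ∑ i ∈ t, (∏ j ∈ t.erase i, (1 - (η j : ℂ) * x)) * (-(η i : ℂ)) :=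
  funext fun x => (hasDerivAt_prod η t x).deriv

lemma deriv_prod_zero (η : ι → ℝ) (t : Finset ι) :
    deriv (fun z : ℂ => ∏ i ∈ t, (1 - (η i : ℂ) * z)) 0 = -∑ i ∈ t, (η i : ℂ) := by
  rw [deriv_prod_eq]
  simp [Finset.sum_neg_distrib]

lemma differentiable_deriv_prod (η : ι → ℝ) (t : Finset ι) :
    Differentiable ℂ (deriv (fun z : ℂ => ∏ i ∈ t, (1 - (η i : ℂ) * z))) := by
  rw [deriv_prod_eq]
  exact Differentiable.fun_sum fun i _ => (differentiable_prod η _).mul_const _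

lemma deriv2_prod_zero (η : ι → ℝ) (t : Finset ι) :
    deriv (deriv (fun z : ℂ => ∏ i ∈ t, (1 - (η i : ℂ) * z))) 0
      = (∑ i ∈ t, (η i : ℂ)) ^ 2 - ∑ i ∈ t, (η i : ℂ) ^ 2 := by
  rw [deriv_prod_eq]
  rw [deriv_fun_sum (fun i _ => ((differentiable_prod η _) 0).mul_const _)]
  have : ∀ i ∈ t, deriv (fun x : ℂ => (∏ j ∈ t.erase i, (1 - (η j : ℂ) * x)) * (-(η i : ℂ))) 0
      = (-∑ j ∈ t.erase i, (η j : ℂ)) * (-(η i : ℂ)) := by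
    intro i _
    rw [deriv_mul_const ((differentiable_prod η _) 0), deriv_prod_zero]
  rw [Finset.sum_congr rfl this]
  have h2 : ∀ i ∈ t, (-∑ j ∈ t.erase i, (η j : ℂ)) * (-(η i : ℂ))
      = ((∑ j ∈ t, (η j : ℂ)) - (η i : ℂ)) * (η i : ℂ) := by
    intro i hi
    rw [← Finset.sum_erase_add t _ hi]
    ring
  rw [Finset.sum_congr rfl h2]
  simp only [sub_mul, Finset.sum_sub_distrib, ← Finset.mul_sum, sq]


noncomputable def sf (η : ι → ℝ) (hfin : ∀ ε : ℝ, 0 < ε → {i : ι | ε ≤ |η i|}.Finite)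
    (ε : ℝ) : Finset ι :=
  if h : 0 < ε then (hfin ε h).toFinset else ∅

lemma mem_sf {η : ι → ℝ} {hfin : ∀ ε : ℝ, 0 < ε → {i : ι | ε ≤ |η i|}.Finite}
    {ε : ℝ} (hε : 0 < ε) {i : ι} : i ∈ sf η hfin ε ↔ ε ≤ |η i| := by
  simp [sf, hε]

variable {η : ι → ℝ} {hfin : ∀ ε : ℝ, 0 < ε → {i : ι | ε ≤ |η i|}.Finite}

lemma sum_tendsto {S : ℝ}
    (hS : Tendsto (fun ε : ℝ => ∑' i : ι, if ε ≤ |η i| then η i else 0)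
      (𝓝[>] (0 : ℝ)) (𝓝 S)) :
    Tendsto (fun ε : ℝ => ∑ i ∈ sf η hfin ε, η i) (𝓝[>] (0 : ℝ)) (𝓝 S) := by
  apply hS.congr'
  filter_upwards [self_mem_nhdsWithin] with ε (hε : 0 < ε)
  rw [tsum_eq_sum (s := sf η hfin ε) (fun b hb => by
    rw [if_neg]; exact fun h => hb ((mem_sf hε).2 h))]
  exact Finset.sum_congr rfl fun i hi => if_pos ((mem_sf hε).1 hi)

lemma sq_sum_tendsto (hsq : Summable fun i => (η i) ^ 2) :
    Tendsto (fun ε : ℝ => ∑ i ∈ sf η hfin ε, (η i) ^ 2) (𝓝[>] (0 : ℝ))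
      (𝓝 (∑' i, (η i) ^ 2)) := by
  intro V hV
  have H : Tendsto (fun t : Finset ι => ∑ i ∈ t, (η i) ^ 2) atTop (𝓝 (∑' i, (η i) ^ 2)) :=
    hsq.hasSum
  have h2 : {t : Finset ι | (∑ i ∈ t, (η i) ^ 2) ∈ V} ∈ (atTop : Filter (Finset ι)) := H hV
  rw [mem_atTop_sets] at h2
  obtain ⟨t₀, h₀⟩ := h2
  set t₁ : Finset ι := t₀.filter (fun i => η i ≠ 0) with ht₁
  set ε₂ : ℝ := if h : t₁.Nonempty then t₁.inf' h (fun i => |η i|) else 1 with hε₂def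
  have hε₂ : 0 < ε₂ := by
    rw [hε₂def]
    split_ifs with h
    · obtain ⟨j, hj, hjeq⟩ := t₁.exists_mem_eq_inf' h (fun i => |η i|)
      rw [hjeq]
      exact abs_pos.2 (by simpa [ht₁] using (Finset.mem_filter.1 hj).2)
    · exact one_pos
  rw [mem_map]
  apply mem_of_superset (Ioc_mem_nhdsGT hε₂)
  intro ε hε
  have hε0 : 0 < ε := hε.1
  have key : ∑ i ∈ sf η hfin ε ∪ t₀, (η i) ^ 2 = ∑ i ∈ sf η hfin ε, (η i) ^ 2 := by
    apply (Finset.sum_subset Finset.subset_union_left ?_).symm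
    intro x hx hnx
    have hx0 : η x = 0 := by
      by_contra hne
      rcases Finset.mem_union.1 hx with h | h
      · exact hnx h
      · have hx1 : x ∈ t₁ := Finset.mem_filter.2 ⟨h, hne⟩
        have : ε₂ ≤ |η x| := by
          rw [hε₂def, dif_pos ⟨x, hx1⟩]
          exact Finset.inf'_le _ hx1
        exact hnx ((mem_sf hε0).2 (le_trans hε.2 this))
    simp [hx0]
  have := h₀ (sf η hfin ε ∪ t₀) (Finset.le_iff_subset.2 Finset.subset_union_right)
  simpa [key] using this


lemma key_facts (hsq : Summable fun i => (η i) ^ 2) {R : ℝ} (hR : 1 ≤ R)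
    (A : Finset ι) (hA : ∀ i, i ∉ A → |η i| < (2 * R)⁻¹) :
    ∀ z : ℂ, ‖z‖ ≤ R → ∀ i,
      ‖(if i ∈ A then 0 else Complex.log (1 - (η i : ℂ) * z) + (η i : ℂ) * z)‖
        ≤ R ^ 2 * (η i) ^ 2 := by
  intro z hz i
  by_cases hiA : i ∈ A
  · simp [hiA]
    positivity
  · rw [if_neg hiA]
    have hR0 : (0 : ℝ) < R := lt_of_lt_of_le one_pos hR
    have hw : ‖-((η i : ℂ) * z)‖ ≤ 1 / 2 := by
      rw [norm_neg, norm_mul, Complex.norm_real, Real.norm_eq_abs]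
      calc |η i| * ‖z‖ ≤ (2 * R)⁻¹ * R := by
            apply mul_le_mul (le_of_lt (hA i hiA)) hz (norm_nonneg _)
            positivity
        _ = 1 / 2 := by field_simp
    have hw1 : ‖-((η i : ℂ) * z)‖ < 1 := lt_of_le_of_lt hw (by norm_num)
    have hlog := Complex.norm_log_one_add_sub_self_le hw1
    have heq : Complex.log (1 - (η i : ℂ) * z) + (η i : ℂ) * z
        = Complex.log (1 + -((η i : ℂ) * z)) - -((η i : ℂ) * z) := by
      ring_nf
    rw [heq]
    refine le_trans hlog ?_
    have h1 : (1 - ‖-((η i : ℂ) * z)‖)⁻¹ ≤ 2 := by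
      rw [inv_le_comm₀ (by linarith) (by norm_num)]
      linarith
    have h2 : ‖-((η i : ℂ) * z)‖ ^ 2 ≤ R ^ 2 * (η i) ^ 2 := by
      rw [norm_neg, norm_mul, Complex.norm_real, Real.norm_eq_abs, mul_pow]
      calc |η i| ^ 2 * ‖z‖ ^ 2 ≤ (η i) ^ 2 * R ^ 2 := by
            rw [_root_.sq_abs]
            exact mul_le_mul_of_nonneg_left (pow_le_pow_left₀ (norm_nonneg _) hz 2) (sq_nonneg _)
        _ = R ^ 2 * (η i) ^ 2 := by ring
    refine le_trans ?_ h2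
    have h3 := mul_le_mul_of_nonneg_left h1 (sq_nonneg ‖-((η i : ℂ) * z)‖)
    linarith



lemma exists_tendstoUniformlyOn (hsq : Summable fun i => (η i) ^ 2) {S : ℝ}
    (hS : Tendsto (fun ε : ℝ => ∑' i : ι, if ε ≤ |η i| then η i else 0)
      (𝓝[>] (0 : ℝ)) (𝓝 S)) {R : ℝ} (hR : 1 ≤ R) :
    ∃ G : ℂ → ℂ, TendstoUniformlyOn
      (fun (ε : ℝ) (z : ℂ) => ∏ i ∈ sf η hfin ε, (1 - (η i : ℂ) * z)) G
      (𝓝[>] (0 : ℝ)) (closedBall 0 R) := by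
  have hR0 : (0 : ℝ) < R := lt_of_lt_of_le one_pos hR
  set ε₀ : ℝ := (2 * R)⁻¹ with hε₀def
  have hε₀ : 0 < ε₀ := by positivity
  set A : Finset ι := sf η hfin ε₀ with hAdef
  have hmemA : ∀ i, i ∉ A → |η i| < (2 * R)⁻¹ := by
    intro i hi
    by_contra hc
    exact hi ((mem_sf hε₀).2 (not_lt.1 hc))
  set a : ℝ := ∑ i ∈ A, η i with hadef
  set h : ι → ℂ → ℂ :=
    fun i z => if i ∈ A then 0 else Complex.log (1 - (η i : ℂ) * z) + (η i : ℂ) * z with hdef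
  have hb : ∀ z : ℂ, ‖z‖ ≤ R → ∀ i, ‖h i z‖ ≤ R ^ 2 * (η i) ^ 2 :=
    fun z hz i => key_facts hsq hR A hmemA z hz i
  have hgsum : Summable (fun i => R ^ 2 * (η i) ^ 2) := hsq.mul_left _
  have hsum : ∀ z : ℂ, ‖z‖ ≤ R → Summable (fun i => h i z) :=
    fun z hz => Summable.of_norm_bounded hgsum (hb z hz)
  have hnorm : ∀ z : ℂ, ‖z‖ ≤ R → Summable (fun i => ‖h i z‖) :=
    fun z hz => Summable.of_nonneg_of_le (fun _ => norm_nonneg _) (hb z hz) hgsum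
  set Hf : ℂ → ℂ := fun z => ∑' i, h i z with hHdef
  set u : ℂ → ℂ := fun z => -(((S : ℝ) - a : ℝ) : ℂ) * z + Hf z with hudef
  set v : ℝ → ℂ → ℂ := fun ε z =>
    -((((∑ i ∈ sf η hfin ε, η i) : ℝ) - a : ℝ) : ℂ) * z + ∑ i ∈ sf η hfin ε, h i z with hvdef
  set C : ℂ → ℂ := fun z => ∏ i ∈ A, (1 - (η i : ℂ) * z) with hCdef
  -- the key algebraic identity
  have hid : ∀ ε : ℝ, 0 < ε → ε ≤ ε₀ → ∀ z ∈ closedBall (0 : ℂ) R,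
      (∏ i ∈ sf η hfin ε, (1 - (η i : ℂ) * z)) = C z * Complex.exp (v ε z) := by
    intro ε hε hεle z hzK
    have hz : ‖z‖ ≤ R := mem_closedBall_zero_iff.1 hzK
    have hAsub : A ⊆ sf η hfin ε := by
      intro i hi
      exact (mem_sf hε).2 (le_trans hεle ((mem_sf hε₀).1 hi))
    have hne : ∀ i ∈ sf η hfin ε \ A, (1 - (η i : ℂ) * z) ≠ 0 := by
      intro i hi
      have hiA : i ∉ A := (Finset.mem_sdiff.1 hi).2
      have hlt : ‖(η i : ℂ) * z‖ < 1 := by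
        rw [norm_mul, Complex.norm_real, Real.norm_eq_abs]
        calc |η i| * ‖z‖ ≤ |η i| * R := mul_le_mul_of_nonneg_left hz (abs_nonneg _)
          _ < (2 * R)⁻¹ * R := mul_lt_mul_of_pos_right (hmemA i hiA) hR0
          _ ≤ 1 := by rw [mul_comm]; rw [mul_inv_le_iff₀ (by positivity)]; nlinarith
      intro heq
      rw [sub_eq_zero] at heq
      rw [← heq] at hlt
      simp at hlt
    have hsplit : (∏ i ∈ sf η hfin ε, (1 - (η i : ℂ) * z))
        = (∏ i ∈ sf η hfin ε \ A, (1 - (η i : ℂ) * z)) * C z := by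
      rw [hCdef]
      exact (Finset.prod_sdiff hAsub).symm
    have hprod : (∏ i ∈ sf η hfin ε \ A, (1 - (η i : ℂ) * z))
        = Complex.exp (∑ i ∈ sf η hfin ε \ A, Complex.log (1 - (η i : ℂ) * z)) := by
      rw [Complex.exp_sum]
      exact Finset.prod_congr rfl fun i hi => (Complex.exp_log (hne i hi)).symm
    have hsumlog : (∑ i ∈ sf η hfin ε \ A, Complex.log (1 - (η i : ℂ) * z)) = v ε z := by
      have hlog_eq : ∀ i ∈ sf η hfin ε \ A,
          Complex.log (1 - (η i : ℂ) * z) = h i z - (η i : ℂ) * z := by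
        intro i hi
        simp only [hdef, if_neg (Finset.mem_sdiff.1 hi).2]
        ring
      rw [Finset.sum_congr rfl hlog_eq, Finset.sum_sub_distrib]
      have h1 : (∑ i ∈ sf η hfin ε \ A, h i z) = ∑ i ∈ sf η hfin ε, h i z := by
        have hz0 : (∑ i ∈ A, h i z) = 0 :=
          Finset.sum_eq_zero fun i hi => by simp only [hdef, if_pos hi]
        have := Finset.sum_sdiff (f := fun i => h i z) hAsub
        rw [hz0, add_zero] at this
        exact this
      have h2 : (∑ i ∈ sf η hfin ε \ A, (η i : ℂ) * z)
          = ((((∑ i ∈ sf η hfin ε, η i) : ℝ) - a : ℝ) : ℂ) * z := by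
        rw [← Finset.sum_mul]
        congr 1
        have := Finset.sum_sdiff (f := fun i => (η i : ℂ)) hAsub
        push_cast
        rw [hadef]
        push_cast
        linear_combination this
      rw [h1, h2, hvdef]
      ring
    rw [hsplit, hprod, hsumlog, mul_comm]
  -- tail bound
  have htail : ∀ ε : ℝ, 0 < ε → ∀ z ∈ closedBall (0 : ℂ) R,
      ‖Hf z - ∑ i ∈ sf η hfin ε, h i z‖
        ≤ R ^ 2 * ((∑' i, (η i) ^ 2) - ∑ i ∈ sf η hfin ε, (η i) ^ 2) := by
    intro ε hε z hzK
    have hz : ‖z‖ ≤ R := mem_closedBall_zero_iff.1 hzK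
    have hkey := Summable.sum_add_tsum_compl (s := sf η hfin ε) (hsum z hz)
    have h1 : Hf z - ∑ i ∈ sf η hfin ε, h i z
        = ∑' i : ↑(↑(sf η hfin ε) : Set ι)ᶜ, h i z := by
      rw [hHdef]
      simp only
      linear_combination -hkey
    rw [h1]
    have hs1 : Summable (fun i : ↑(↑(sf η hfin ε) : Set ι)ᶜ => ‖h i z‖) :=
      (hnorm z hz).subtype _
    have hs2 : Summable (fun i : ↑(↑(sf η hfin ε) : Set ι)ᶜ => R ^ 2 * (η i) ^ 2) :=
      hgsum.subtype _
    calc ‖∑' i : ↑(↑(sf η hfin ε) : Set ι)ᶜ, h i z‖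
        ≤ ∑' i : ↑(↑(sf η hfin ε) : Set ι)ᶜ, ‖h i z‖ := norm_tsum_le_tsum_norm hs1
      _ ≤ ∑' i : ↑(↑(sf η hfin ε) : Set ι)ᶜ, R ^ 2 * (η i) ^ 2 :=
          Summable.tsum_le_tsum (fun i => hb z hz i) hs1 hs2
      _ = R ^ 2 * ((∑' i, (η i) ^ 2) - ∑ i ∈ sf η hfin ε, (η i) ^ 2) := by
          have hkey2 := Summable.sum_add_tsum_compl (s := sf η hfin ε) hgsum
          have : (∑' i : ↑(↑(sf η hfin ε) : Set ι)ᶜ, R ^ 2 * (η i) ^ 2)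
              = (∑' i, R ^ 2 * (η i) ^ 2) - ∑ i ∈ sf η hfin ε, R ^ 2 * (η i) ^ 2 := by
            linarith [hkey2]
          rw [this, tsum_mul_left, ← Finset.mul_sum]
          ring
  -- uniform convergence of the exponents
  have hvu : TendstoUniformlyOn v u (𝓝[>] (0 : ℝ)) (closedBall 0 R) := by
    rw [Metric.tendstoUniformlyOn_iff]
    intro δ hδ
    have hT := sum_tendsto (hfin := hfin) hS
    have hQ := sq_sum_tendsto (hfin := hfin) hsq
    have h1 : ∀ᶠ ε in 𝓝[>] (0 : ℝ),
        |(∑ i ∈ sf η hfin ε, η i) - S| < δ / (2 * (R + 1)) := by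
      have := Metric.tendsto_nhds.1 hT (δ / (2 * (R + 1))) (by positivity)
      simpa [Real.dist_eq] using this
    have h2 : ∀ᶠ ε in 𝓝[>] (0 : ℝ),
        |(∑ i ∈ sf η hfin ε, (η i) ^ 2) - ∑' i, (η i) ^ 2| < δ / (2 * (R ^ 2 + 1)) := by
      have := Metric.tendsto_nhds.1 hQ (δ / (2 * (R ^ 2 + 1))) (by positivity)
      simpa [Real.dist_eq] using this
    filter_upwards [h1, h2, self_mem_nhdsWithin] with ε he1 he2 hεm
    have hε : 0 < ε := hεm
    intro z hzK
    have hz : ‖z‖ ≤ R := mem_closedBall_zero_iff.1 hzK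
    rw [dist_eq_norm]
    have hdiff : u z - v ε z
        = ((((∑ i ∈ sf η hfin ε, η i) : ℝ) - S : ℝ) : ℂ) * z
          + (Hf z - ∑ i ∈ sf η hfin ε, h i z) := by
      simp only [hudef, hvdef]
      push_cast
      ring
    rw [hdiff]
    have hA1 : ‖((((∑ i ∈ sf η hfin ε, η i) : ℝ) - S : ℝ) : ℂ) * z‖
        ≤ |(∑ i ∈ sf η hfin ε, η i) - S| * R := by
      rw [norm_mul, Complex.norm_real, Real.norm_eq_abs]
      exact mul_le_mul_of_nonneg_left hz (abs_nonneg _)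
    have hA2 := htail ε hε z hzK
    have hnn : (∑ i ∈ sf η hfin ε, (η i) ^ 2) ≤ ∑' i, (η i) ^ 2 :=
      Summable.sum_le_tsum _ (fun _ _ => sq_nonneg _) hsq
    have habs : (∑' i, (η i) ^ 2) - ∑ i ∈ sf η hfin ε, (η i) ^ 2
        ≤ |(∑ i ∈ sf η hfin ε, (η i) ^ 2) - ∑' i, (η i) ^ 2| := by
      rw [abs_sub_comm]
      exact le_abs_self _
    have e1 : |(∑ i ∈ sf η hfin ε, η i) - S| * R < δ / 2 := by
      calc |(∑ i ∈ sf η hfin ε, η i) - S| * R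
          ≤ |(∑ i ∈ sf η hfin ε, η i) - S| * (R + 1) :=
            mul_le_mul_of_nonneg_left (by linarith) (abs_nonneg _)
        _ < (δ / (2 * (R + 1))) * (R + 1) := mul_lt_mul_of_pos_right he1 (by linarith)
        _ = δ / 2 := by field_simp
    have e2 : R ^ 2 * ((∑' i, (η i) ^ 2) - ∑ i ∈ sf η hfin ε, (η i) ^ 2) < δ / 2 := by
      calc R ^ 2 * ((∑' i, (η i) ^ 2) - ∑ i ∈ sf η hfin ε, (η i) ^ 2)
          ≤ (R ^ 2 + 1) * ((∑' i, (η i) ^ 2) - ∑ i ∈ sf η hfin ε, (η i) ^ 2) := by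
            apply mul_le_mul_of_nonneg_right (by linarith) (by linarith)
        _ ≤ (R ^ 2 + 1) * |(∑ i ∈ sf η hfin ε, (η i) ^ 2) - ∑' i, (η i) ^ 2| :=
            mul_le_mul_of_nonneg_left habs (by positivity)
        _ < (R ^ 2 + 1) * (δ / (2 * (R ^ 2 + 1))) :=
            mul_lt_mul_of_pos_left he2 (by positivity)
        _ = δ / 2 := by field_simp
    calc ‖((((∑ i ∈ sf η hfin ε, η i) : ℝ) - S : ℝ) : ℂ) * z
          + (Hf z - ∑ i ∈ sf η hfin ε, h i z)‖
        ≤ ‖((((∑ i ∈ sf η hfin ε, η i) : ℝ) - S : ℝ) : ℂ) * z‖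
          + ‖Hf z - ∑ i ∈ sf η hfin ε, h i z‖ := norm_add_le _ _
      _ < δ := by linarith
  -- bound on `u`
  have hHb : ∀ z ∈ closedBall (0 : ℂ) R, ‖Hf z‖ ≤ R ^ 2 * ∑' i, (η i) ^ 2 := by
    intro z hzK
    have hz : ‖z‖ ≤ R := mem_closedBall_zero_iff.1 hzK
    calc ‖Hf z‖ ≤ ∑' i, ‖h i z‖ := norm_tsum_le_tsum_norm (hnorm z hz)
      _ ≤ ∑' i, R ^ 2 * (η i) ^ 2 := Summable.tsum_le_tsum (fun i => hb z hz i) (hnorm z hz) hgsum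
      _ = R ^ 2 * ∑' i, (η i) ^ 2 := tsum_mul_left
  set B : ℝ := |S - a| * R + R ^ 2 * ∑' i, (η i) ^ 2 with hBdef
  have hub : ∀ z ∈ closedBall (0 : ℂ) R, ‖u z‖ ≤ B := by
    intro z hzK
    have hz : ‖z‖ ≤ R := mem_closedBall_zero_iff.1 hzK
    calc ‖u z‖ ≤ ‖-(((S : ℝ) - a : ℝ) : ℂ) * z‖ + ‖Hf z‖ := norm_add_le _ _
      _ ≤ |S - a| * R + R ^ 2 * ∑' i, (η i) ^ 2 := by
          apply add_le_add ?_ (hHb z hzK)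
          rw [norm_mul, norm_neg, Complex.norm_real, Real.norm_eq_abs]
          exact mul_le_mul_of_nonneg_left hz (abs_nonneg _)
  -- bound on `C`
  obtain ⟨M₀, hM₀⟩ := (isCompact_closedBall (0 : ℂ) R).exists_bound_of_continuousOn
    ((differentiable_prod η A).continuous.continuousOn (s := closedBall (0 : ℂ) R))
  set M : ℝ := max M₀ 0 with hMdef
  have hM0 : 0 ≤ M := le_max_right _ _
  have hMb : ∀ z ∈ closedBall (0 : ℂ) R, ‖C z‖ ≤ M :=
    fun z hzK => le_trans (hM₀ z hzK) (le_max_left _ _)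
  -- final assembly
  refine ⟨fun z => C z * Complex.exp (u z), ?_⟩
  rw [Metric.tendstoUniformlyOn_iff]
  intro δ hδ
  set q : ℝ := M * Real.exp B with hqdef
  have hq0 : 0 ≤ q := mul_nonneg hM0 (le_of_lt (Real.exp_pos _))
  set δ' : ℝ := min 1 (δ / (2 * q + 1)) with hδ'def
  have hδ'0 : 0 < δ' := lt_min one_pos (by positivity)
  have hev := Metric.tendstoUniformlyOn_iff.1 hvu δ' hδ'0
  filter_upwards [hev, Ioc_mem_nhdsGT hε₀] with ε hε1 hε2
  intro z hzK
  rw [hid ε hε2.1 hε2.2 z hzK]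
  have hvuz : ‖v ε z - u z‖ < δ' := by
    have := hε1 z hzK
    rw [dist_eq_norm, norm_sub_rev] at this
    exact this
  have hsplit2 : Complex.exp (u z) - Complex.exp (v ε z)
      = Complex.exp (u z) * (1 - Complex.exp (v ε z - u z)) := by
    rw [mul_sub, mul_one, ← Complex.exp_add]
    have huv : u z + (v ε z - u z) = v ε z := by ring
    rw [huv]
  have heu : ‖Complex.exp (u z)‖ ≤ Real.exp B := by
    rw [Complex.norm_exp]
    exact Real.exp_le_exp.2 (le_trans (Complex.re_le_norm _) (hub z hzK))
  have h1e : ‖1 - Complex.exp (v ε z - u z)‖ ≤ 2 * ‖v ε z - u z‖ := by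
    rw [norm_sub_rev]
    simpa using
      Complex.norm_exp_sub_one_le (x := v ε z - u z)
        (le_trans (le_of_lt hvuz) (min_le_left _ _))
  have hd : dist (C z * Complex.exp (u z)) (C z * Complex.exp (v ε z))
      = ‖C z‖ * ‖Complex.exp (u z) - Complex.exp (v ε z)‖ := by
    rw [dist_eq_norm, ← mul_sub, norm_mul]
  rw [hd]
  have hbound : ‖C z‖ * ‖Complex.exp (u z) - Complex.exp (v ε z)‖ ≤ 2 * q * δ' := by
    rw [hsplit2, norm_mul]
    calc ‖C z‖ * (‖Complex.exp (u z)‖ * ‖1 - Complex.exp (v ε z - u z)‖)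
        ≤ M * (Real.exp B * (2 * δ')) := by
          apply mul_le_mul (hMb z hzK) ?_ (by positivity) hM0
          apply mul_le_mul heu ?_ (norm_nonneg _) (le_of_lt (Real.exp_pos _))
          exact le_trans h1e (by nlinarith [le_of_lt hvuz])
      _ = 2 * q * δ' := by rw [hqdef]; ring
  have hδ'le : δ' ≤ δ / (2 * q + 1) := min_le_right _ _
  have hfin2 : 2 * q * δ' < δ := by
    have hkey : (2 * q + 1) * (δ / (2 * q + 1)) = δ := by field_simp
    nlinarith [mul_le_mul_of_nonneg_left hδ'le (by linarith : (0:ℝ) ≤ 2 * q)]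
  linarith

end Stmt0Aux


open Stmt0Aux in
/-- Principal-value sums and products: locally uniform convergence of the partial
products and the values of the first two derivatives of the limit at `0`. -/
theorem stmt0 {ι : Type*} [Countable ι] (η : ι → ℝ)
    (hfin : ∀ ε : ℝ, 0 < ε → {i : ι | ε ≤ |η i|}.Finite)
    (hsq : Summable fun i => (η i) ^ 2) (S : ℝ)
    (hS : Tendsto (fun ε : ℝ => ∑' i : ι, if ε ≤ |η i| then η i else 0)
      (𝓝[>] (0 : ℝ)) (𝓝 S)) :
    ∃ Λ : ℂ → ℂ, (∀ z, DifferentiableAt ℂ Λ z) ∧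
      TendstoLocallyUniformly
        (fun (ε : ℝ) (z : ℂ) => ∏' i : ι, if ε ≤ |η i| then 1 - (η i : ℂ) * z else 1)
        Λ (𝓝[>] (0 : ℝ)) ∧
      deriv Λ 0 = -(S : ℂ) ∧
      deriv (deriv Λ) 0 = (S : ℂ) ^ 2 - ((∑' i : ι, (η i) ^ 2 : ℝ) : ℂ) := by
  classical
  set P : ℝ → ℂ → ℂ := fun ε z => ∏ i ∈ sf η hfin ε, (1 - (η i : ℂ) * z) with hPdef
  have hFP : ∀ ε : ℝ, 0 < ε →
      (fun z : ℂ => ∏' i : ι, if ε ≤ |η i| then 1 - (η i : ℂ) * z else 1) = P ε := by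
    intro ε hε
    funext z
    rw [tprod_eq_prod (s := sf η hfin ε) (fun b hb => if_neg (fun hc => hb ((mem_sf hε).2 hc)))]
    exact Finset.prod_congr rfl fun i hi => if_pos ((mem_sf hε).1 hi)
  set Λ : ℂ → ℂ := fun z => limUnder (𝓝[>] (0 : ℝ)) (fun ε => P ε z) with hΛdef
  have huniform : ∀ R : ℝ, 1 ≤ R →
      TendstoUniformlyOn P Λ (𝓝[>] (0 : ℝ)) (closedBall 0 R) := by
    intro R hR
    obtain ⟨G, hG⟩ := exists_tendstoUniformlyOn (hfin := hfin) hsq hS hR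
    exact hG.congr_right fun z hz => ((hG.tendsto_at hz).limUnder_eq).symm
  have hloc : TendstoLocallyUniformly P Λ (𝓝[>] (0 : ℝ)) := by
    rw [tendstoLocallyUniformly_iff_forall_isCompact]
    intro K hK
    obtain ⟨r, hr⟩ := hK.isBounded.subset_closedBall (0 : ℂ)
    exact (huniform (max r 1) (le_max_right _ _)).mono
      (hr.trans (closedBall_subset_closedBall (le_max_left _ _)))
  have hPdiff : ∀ ε : ℝ, Differentiable ℂ (P ε) := fun ε => differentiable_prod η _
  have hlocU : TendstoLocallyUniformlyOn P Λ (𝓝[>] (0 : ℝ)) univ :=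
    tendstoLocallyUniformlyOn_univ.2 hloc
  have hΛdiff : Differentiable ℂ Λ := by
    have := hlocU.differentiableOn
      (Eventually.of_forall fun ε => (hPdiff ε).differentiableOn) isOpen_univ
    rwa [differentiableOn_univ] at this
  have hd1 : TendstoLocallyUniformlyOn (deriv ∘ P) (deriv Λ) (𝓝[>] (0 : ℝ)) univ :=
    hlocU.deriv (Eventually.of_forall fun ε => (hPdiff ε).differentiableOn) isOpen_univ
  have hd2 : TendstoLocallyUniformlyOn (deriv ∘ (deriv ∘ P)) (deriv (deriv Λ))
      (𝓝[>] (0 : ℝ)) univ :=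
    hd1.deriv (Eventually.of_forall fun ε =>
      (differentiable_deriv_prod η (sf η hfin ε)).differentiableOn) isOpen_univ
  have ht1 : Tendsto (fun ε => deriv (P ε) 0) (𝓝[>] (0 : ℝ)) (𝓝 (deriv Λ 0)) :=
    hd1.tendsto_at (mem_univ 0)
  have ht2 : Tendsto (fun ε => deriv (deriv (P ε)) 0) (𝓝[>] (0 : ℝ))
      (𝓝 (deriv (deriv Λ) 0)) := hd2.tendsto_at (mem_univ 0)
  have hT : Tendsto (fun ε : ℝ => ∑ i ∈ sf η hfin ε, η i) (𝓝[>] (0 : ℝ)) (𝓝 S) :=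
    sum_tendsto (hfin := hfin) hS
  have hQ : Tendsto (fun ε : ℝ => ∑ i ∈ sf η hfin ε, (η i) ^ 2) (𝓝[>] (0 : ℝ))
      (𝓝 (∑' i, (η i) ^ 2)) := sq_sum_tendsto (hfin := hfin) hsq
  have hTc : Tendsto (fun ε : ℝ => ((∑ i ∈ sf η hfin ε, η i : ℝ) : ℂ)) (𝓝[>] (0 : ℝ))
      (𝓝 ((S : ℝ) : ℂ)) := (Complex.continuous_ofReal.tendsto S).comp hT
  have hQc : Tendsto (fun ε : ℝ => ((∑ i ∈ sf η hfin ε, (η i) ^ 2 : ℝ) : ℂ)) (𝓝[>] (0 : ℝ))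
      (𝓝 ((∑' i, (η i) ^ 2 : ℝ) : ℂ)) :=
    (Complex.continuous_ofReal.tendsto _).comp hQ
  have hder1 : deriv Λ 0 = -(S : ℂ) := by
    refine tendsto_nhds_unique (ht1.congr fun ε => ?_) hTc.neg
    rw [deriv_prod_zero η (sf η hfin ε)]
    push_cast
    ring
  have hder2 : deriv (deriv Λ) 0 = (S : ℂ) ^ 2 - ((∑' i : ι, (η i) ^ 2 : ℝ) : ℂ) := by
    refine tendsto_nhds_unique (ht2.congr fun ε => ?_) ((hTc.pow 2).sub hQc)
    rw [deriv2_prod_zero η (sf η hfin ε)]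
    push_cast
    ring
  refine ⟨Λ, fun z => hΛdiff z, ?_, hder1, hder2⟩
  rw [tendstoLocallyUniformly_iff_forall_isCompact]
  intro K hK
  apply (tendstoLocallyUniformly_iff_forall_isCompact.1 hloc K hK).congr
  filter_upwards [self_mem_nhdsWithin] with ε (hε : (0 : ℝ) < ε)
  intro z hz
  exact (congrFun (hFP ε hε) z).symm
end

section
/- Let $\nu$ be a Borel measure on an interval $I\subseteq\mathbb{R}$, let $g$ be a left-continuous distribution function of $\nu$ (i.e. $g(y)-g(x)=\nu([x,y))$ for $x\leq y$), and let $f$ be locally absolutely continuous on $I$. Then for all $x,y\in I$ with $x\leq y$: $\int_{[x,y)} f\,d\nu = g(y)f(y)-g(x)f(x) - \int_x^y g(\xi)f'(\xi)\,d\xi$. -/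
open MeasureTheory

/-- Integration by parts: if `g` is a left-continuous distribution function of the
Borel measure `ν` and `f` is (locally) absolutely continuous with derivative `f'`,
then `∫_{[x,y)} f dν = g(y)f(y) - g(x)f(x) - ∫_x^y g f'`. -/
theorem stmt1 (ν : Measure ℝ) [IsLocallyFiniteMeasure ν]
    (g f f' : ℝ → ℝ)
    (hg : ∀ x y : ℝ, x ≤ y → g y - g x = (ν (Set.Ico x y)).toReal)
    (hf : ∀ x y : ℝ, f y - f x = ∫ t in x..y, f' t)
    (hf' : LocallyIntegrable f' volume)
    (x y : ℝ) (hxy : x ≤ y)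
    (hint : IntegrableOn f (Set.Ico x y) ν)
    (hint2 : IntervalIntegrable (fun t => g t * f' t) volume x y) :
    ∫ t in Set.Ico x y, f t ∂ν
      = g y * f y - g x * f x - ∫ t in x..y, g t * f' t := by
  -- finite measures
  have hfin : ν (Set.Ico x y) < ⊤ :=
    (measure_mono Set.Ico_subset_Icc_self).trans_lt isCompact_Icc.measure_lt_top
  set μ : Measure ℝ := ν.restrict (Set.Ico x y) with hμ
  haveI : IsFiniteMeasure μ := by
    constructor
    rw [hμ, Measure.restrict_apply_univ]
    exact hfin
  set lam : Measure ℝ := volume.restrict (Set.Ioc x y) with hlam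
  haveI : IsFiniteMeasure lam := by
    constructor
    rw [hlam, Measure.restrict_apply_univ]
    exact measure_Ioc_lt_top
  -- integrability of f' on Ioc x y
  have hf'int : IntegrableOn f' (Set.Ioc x y) volume :=
    (hf'.integrableOn_isCompact isCompact_Icc).mono_set Set.Ioc_subset_Icc_self
  have hf'ii : IntervalIntegrable f' volume x y :=
    (intervalIntegrable_iff_integrableOn_Ioc_of_le hxy).mpr hf'int
  -- the product function
  set F : ℝ × ℝ → ℝ := fun p => Set.indicator {p : ℝ × ℝ | p.1 < p.2} (fun p => f' p.2) p
    with hF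
  have hSmeas : MeasurableSet {p : ℝ × ℝ | p.1 < p.2} :=
    (isOpen_lt continuous_fst continuous_snd).measurableSet
  have hGmeas : AEStronglyMeasurable (fun p : ℝ × ℝ => f' p.2) (μ.prod lam) :=
    (hf'.aestronglyMeasurable.restrict (s := Set.Ioc x y)).comp_snd
  have hGint : Integrable (fun p : ℝ × ℝ => f' p.2) (μ.prod lam) := by
    rw [integrable_prod_iff hGmeas]
    refine ⟨Filter.Eventually.of_forall fun t => hf'int, ?_⟩
    have : (fun t : ℝ => ∫ s, ‖f' (t, s).2‖ ∂lam) = fun _ : ℝ => ∫ s, ‖f' s‖ ∂lam := rfl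
    rw [this]
    exact integrable_const _
  have hFint : Integrable F (μ.prod lam) := hGint.indicator hSmeas
  -- rewrite f via its derivative
  have key : ∀ t : ℝ, f t = f y - ∫ s in t..y, f' s := by
    intro t; have := hf t y; linarith
  have h1 : Integrable (fun t => ∫ s in t..y, f' s) μ := by
    have he : (fun t => ∫ s in t..y, f' s) = fun t => f y - f t := by
      funext t; rw [key t]; ring
    rw [he]
    exact (integrable_const _).sub hint
  have step1 : ∫ t in Set.Ico x y, f t ∂ν
      = f y * (ν (Set.Ico x y)).toReal - ∫ t, (∫ s in t..y, f' s) ∂μ := by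
    calc ∫ t, f t ∂μ = ∫ t, (f y - ∫ s in t..y, f' s) ∂μ := by
          apply integral_congr_ae
          filter_upwards with t
          exact key t
      _ = (∫ _t, f y ∂μ) - ∫ t, (∫ s in t..y, f' s) ∂μ :=
          integral_sub (integrable_const _) h1
      _ = f y * (ν (Set.Ico x y)).toReal - ∫ t, (∫ s in t..y, f' s) ∂μ := by
          rw [integral_const, hμ, measureReal_restrict_apply_univ, measureReal_def, smul_eq_mul, mul_comm]
  -- express the inner integral with the product function
  have step2 : ∫ t, (∫ s in t..y, f' s) ∂μ = ∫ t, (∫ s, F (t, s) ∂lam) ∂μ := by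
    rw [hμ]
    apply setIntegral_congr_fun measurableSet_Ico
    intro t ht
    have hty : t ≤ y := le_of_lt ht.2
    have hcol : (fun s => F (t, s)) = Set.indicator (Set.Ioi t) f' := by
      funext s
      simp [hF, Set.indicator_apply, Set.mem_Ioi]
    show (∫ s in t..y, f' s) = ∫ s, F (t, s) ∂lam
    rw [intervalIntegral.integral_of_le hty, hcol, integral_indicator measurableSet_Ioi,
      hlam, Measure.restrict_restrict measurableSet_Ioi]
    congr 2
    rw [Set.inter_comm, Set.Ioc_inter_Ioi, sup_eq_right.mpr ht.1]
  -- Fubini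
  have step3 : ∫ t, (∫ s, F (t, s) ∂lam) ∂μ = ∫ s, (∫ t, F (t, s) ∂μ) ∂lam :=
    integral_integral_swap (f := fun t s => F (t, s)) hFint
  -- compute the inner integral after swapping
  have step4 : ∫ s, (∫ t, F (t, s) ∂μ) ∂lam = ∫ s in x..y, (g s - g x) * f' s := by
    rw [intervalIntegral.integral_of_le hxy, hlam]
    apply setIntegral_congr_fun measurableSet_Ioc
    intro s hs
    have hrow : (fun t => F (t, s)) = Set.indicator (Set.Iio s) (fun _ => f' s) := by
      funext t
      simp [hF, Set.indicator_apply, Set.mem_Iio]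
    show (∫ t, F (t, s) ∂μ) = (g s - g x) * f' s
    rw [hrow, integral_indicator measurableSet_Iio, setIntegral_const, hμ,
      measureReal_restrict_apply measurableSet_Iio, measureReal_def]
    have : Set.Iio s ∩ Set.Ico x y = Set.Ico x s := by
      rw [Set.inter_comm, Set.Ico_inter_Iio, min_eq_right hs.2]
    rw [this, smul_eq_mul, ← hg x s hs.1.le]
  -- split the last integral
  have step5 : ∫ s in x..y, (g s - g x) * f' s
      = (∫ s in x..y, g s * f' s) - g x * (f y - f x) := by
    have he : (fun s => (g s - g x) * f' s) = fun s => g s * f' s - g x * f' s := by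
      funext s; ring
    rw [he, intervalIntegral.integral_sub hint2 (hf'ii.const_mul (g x)),
      intervalIntegral.integral_const_mul, ← hf x y]
  have hgy : (ν (Set.Ico x y)).toReal = g y - g x := (hg x y hxy).symm
  rw [step1, step2, step3, step4, step5, hgy]
  ring
end
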